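/- The elegant Bell expression attains the value 2 + 2√5 with the strategy: maximally entangled state |φ⁺⟩, Alice's observables A₁ = A₂ = Z, A₃ = X (note [A₁, A₂] = 0), and Bob's observables B₁ = (2Z + X)/√5, B₄ = (−2Z + X)/√5, B₂ = B₃ = −X. -/
import Mathlib


open Matrix Kronecker

noncomputable section

def σX : Matrix (Fin 2) (Fin 2) ℂ := !![0, 1; 1, 0]
def σZ : Matrix (Fin 2) (Fin 2) ℂ := !![1, 0; 0, -1]

/-- The maximally entangled two-qubit state `|φ⁺⟩ = (|00⟩ + |11⟩)/√2`. -/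
def phiPlus : Fin 2 × Fin 2 → ℂ :=
  fun p => if p.1 = p.2 then ((Real.sqrt 2)⁻¹ : ℝ) else 0

/-- Correlator `⟨A ⊗ B⟩ = ⟨φ⁺|A ⊗ B|φ⁺⟩`. -/
def corr (A B : Matrix (Fin 2) (Fin 2) ℂ) : ℝ :=
  (star phiPlus ⬝ᵥ ((A ⊗ₖ B) *ᵥ phiPlus)).re

/-- Alice's observables: `A₁ = A₂ = Z`, `A₃ = X` (so `[A₁, A₂] = 0`). -/
def Alices : Fin 3 → Matrix (Fin 2) (Fin 2) ℂ := ![σZ, σZ, σX]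

/-- Bob's observables: `B₁ = (2Z + X)/√5`, `B₂ = B₃ = −X`, `B₄ = (−2Z + X)/√5`. -/
def Bobs : Fin 4 → Matrix (Fin 2) (Fin 2) ℂ :=
  ![ (((Real.sqrt 5)⁻¹ : ℝ) : ℂ) • ((2 : ℂ) • σZ + σX),
     -σX,
     -σX,
     (((Real.sqrt 5)⁻¹ : ℝ) : ℂ) • (-(2 : ℂ) • σZ + σX) ]

lemma corr_eq (A B : Matrix (Fin 2) (Fin 2) ℂ) :
    corr A B = ((A 0 0 * B 0 0 + A 0 1 * B 0 1 + A 1 0 * B 1 0 + A 1 1 * B 1 1).re) / 2 := by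
  simp [corr, phiPlus, dotProduct, mulVec, Fintype.sum_prod_type, Fin.sum_univ_succ,
    kroneckerMap_apply]
  ring_nf
  rw [Real.sq_sqrt (by norm_num : (2:ℝ) ≥ 0)]
  ring

/-- The elegant Bell expression attains `2 + 2√5` with the strategy
`A₁ = A₂ = Z`, `A₃ = X` and Bob's observables above on `|φ⁺⟩`,
even though Alice's first two observables commute. -/
theorem elegant_attains_Q2convJM_bound :
    Alices 0 * Alices 1 = Alices 1 * Alices 0
    ∧ corr (Alices 0) (Bobs 0) + corr (Alices 0) (Bobs 1)
        - corr (Alices 0) (Bobs 2) - corr (Alices 0) (Bobs 3)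
      + corr (Alices 1) (Bobs 0) - corr (Alices 1) (Bobs 1)
        + corr (Alices 1) (Bobs 2) - corr (Alices 1) (Bobs 3)
      + corr (Alices 2) (Bobs 0) - corr (Alices 2) (Bobs 1)
        - corr (Alices 2) (Bobs 2) + corr (Alices 2) (Bobs 3)
      = 2 + 2 * Real.sqrt 5 := by
  constructor
  · rfl
  · have h5 : Real.sqrt 5 > 0 := Real.sqrt_pos.mpr (by norm_num)
    have hsq : Real.sqrt 5 * Real.sqrt 5 = 5 := Real.mul_self_sqrt (by norm_num)
    simp [corr_eq, Alices, Bobs, σX, σZ]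
    field_simp
    linarith [hsq]

end
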